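/- The closed-form F81 transition probabilities arise as a matrix exponential of the F81 rate matrix: for rates λ : Fin 4 → ℝ with λ a > 0 for all a, define the 4×4 rate matrix Q by Q b a = λ a for a ≠ b and Q a a = −∑_{c ≠ a} λ c. Then for every t ≥ 0 and all states a, b, the (b, a) entry of the matrix exponential exp(t • Q) equals P a b t = if a = b then α t * (π a − 1) + 1 else α t * π a, where π a = λ a / (∑ c, λ c) and α t = 1 − exp(−t · ∑ c, λ c). -/

import Mathlib

open Finset

/-- Stationary probabilities of the F81 model with rates `L`. -/
noncomputable def f81Pi (L : Fin 4 → ℝ) (a : Fin 4) : ℝ := L a / ∑ b, L b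

/-- The probability of at least one substitution in the F81 model with rates `L`. -/
noncomputable def f81Alpha (L : Fin 4 → ℝ) (t : ℝ) : ℝ :=
  1 - Real.exp (-(t * ∑ a, L a))

/-- Transition probabilities of the F81 model: probability of being in state `a` at
time `t` having started in state `b`. -/
noncomputable def f81P (L : Fin 4 → ℝ) (a b : Fin 4) (t : ℝ) : ℝ :=
  if a = b then f81Alpha L t * (f81Pi L a - 1) + 1 else f81Alpha L t * f81Pi L a

/-- The F81 rate matrix: `Q b a = L a` for `a ≠ b`, and `Q a a = -∑_{c ≠ a} L c`. -/
noncomputable def f81Q (L : Fin 4 → ℝ) : Matrix (Fin 4) (Fin 4) ℝ :=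
  fun b a => if a = b then -(∑ c ∈ Finset.univ.erase a, L c) else L a

/-- The closed-form F81 transition probabilities arise from the matrix exponential of the
rate matrix: for all `t ≥ 0` and states `a, b`, `(exp (t • Q)) b a = P a b t`. -/

lemma exp_sq_eq (M : Matrix (Fin 4) (Fin 4) ℝ) (s : ℝ) (hs : s ≠ 0) (hM : M * M = s • M) (t : ℝ) :
    NormedSpace.exp (t • M) = 1 + ((Real.exp (t*s) - 1)/s) • M := by
  letI : SeminormedRing (Matrix (Fin 4) (Fin 4) ℝ) := Matrix.linftyOpSemiNormedRing
  letI : NormedRing (Matrix (Fin 4) (Fin 4) ℝ) := Matrix.linftyOpNormedRing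
  letI : NormedAlgebra ℝ (Matrix (Fin 4) (Fin 4) ℝ) := Matrix.linftyOpNormedAlgebra
  have hpow : ∀ n : ℕ, (t • M) ^ (n+1) = (t ^ (n+1) * s ^ n) • M := by
    intro n
    induction n with
    | zero => simp
    | succ n ih =>
      rw [pow_succ, ih, smul_mul_assoc, Matrix.mul_smul, hM, smul_smul, smul_smul]
      ring_nf
  rw [NormedSpace.exp_eq_tsum ℝ]
  simp only []
  erw [Summable.tsum_eq_zero_add (NormedSpace.expSeries_summable' (𝕂 := ℝ) (t • M))]
  congr 1
  · simp
  have : ∀ n : ℕ, ((Nat.factorial (n+1)) : ℝ)⁻¹ • (t • M) ^ (n+1)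
      = ((t*s) ^ (n+1) / (Nat.factorial (n+1)) / s) • M := by
    intro n
    rw [hpow, smul_smul]
    congr 1
    field_simp
    ring
  simp_rw [this]
  rw [Summable.tsum_smul_const]
  · congr 1
    rw [tsum_div_const]
    congr 1
    have h : Real.exp (t*s) = ∑' n : ℕ, (t*s) ^ n / Nat.factorial n := by
      rw [Real.exp_eq_exp_ℝ, NormedSpace.exp_eq_tsum_div]
    have hs2 : Summable fun n : ℕ => (t*s) ^ n / Nat.factorial n :=
      Real.summable_pow_div_factorial _
    rw [h, Summable.tsum_eq_zero_add hs2]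
    simp
  · apply Summable.div_const
    exact ((Real.summable_pow_div_factorial (t*s)).comp_injective
      (add_left_injective 1)).congr (by simp)

lemma exp_smul_one (c : ℝ) :
    NormedSpace.exp (c • (1 : Matrix (Fin 4) (Fin 4) ℝ)) = Real.exp c • 1 := by
  letI : SeminormedRing (Matrix (Fin 4) (Fin 4) ℝ) := Matrix.linftyOpSemiNormedRing
  letI : NormedRing (Matrix (Fin 4) (Fin 4) ℝ) := Matrix.linftyOpNormedRing
  letI : NormedAlgebra ℝ (Matrix (Fin 4) (Fin 4) ℝ) := Matrix.linftyOpNormedAlgebra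
  rw [← Algebra.algebraMap_eq_smul_one]
  erw [← NormedSpace.algebraMap_exp_comm]
  rw [Real.exp_eq_exp_ℝ, Algebra.algebraMap_eq_smul_one]

theorem f81_matrix_exponential' (L : Fin 4 → ℝ) (hL : ∀ a, 0 < L a)
    (t : ℝ) (ht : 0 ≤ t) (a b : Fin 4)
    (f81Q : (Fin 4 → ℝ) → Matrix (Fin 4) (Fin 4) ℝ)
    (hQ : f81Q L = fun b a => if a = b then -(∑ c ∈ Finset.univ.erase a, L c) else L a) :
    NormedSpace.exp (t • f81Q L) b a =
      (if a = b then (1 - Real.exp (-(t * ∑ c, L c))) * (L a / ∑ c, L c - 1) + 1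
        else (1 - Real.exp (-(t * ∑ c, L c))) * (L a / ∑ c, L c)) := by
  set s : ℝ := ∑ c, L c with hs_def
  have hs : 0 < s := Finset.sum_pos (fun c _ => hL c) ⟨0, Finset.mem_univ 0⟩
  set M : Matrix (Fin 4) (Fin 4) ℝ := Matrix.of fun b a => L a with hM_def
  have hdecomp : t • f81Q L = (-(t*s)) • (1 : Matrix (Fin 4) (Fin 4) ℝ) + t • M := by
    ext i j
    rw [Matrix.smul_apply]
    simp only [hQ, Matrix.add_apply, Matrix.smul_apply, hM_def, Matrix.of_apply, smul_eq_mul]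
    by_cases h : j = i
    · subst h
      rw [Matrix.one_apply_eq, if_pos rfl, Finset.sum_erase_eq_sub (Finset.mem_univ j)]
      ring
    · rw [if_neg h, Matrix.one_apply_ne (Ne.symm h)]
      ring
  have hM2 : M * M = s • M := by
    ext i j
    simp [hM_def, Matrix.mul_apply, ← Finset.sum_mul, hs_def]
  have hcomm : Commute ((-(t*s)) • (1 : Matrix (Fin 4) (Fin 4) ℝ)) (t • M) :=
    ((Commute.one_left (t • M)).smul_left _)
  rw [hdecomp, Matrix.exp_add_of_commute _ _ hcomm, exp_smul_one,
    exp_sq_eq M s hs.ne' hM2 t]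
  have hkey : Real.exp (-(t*s)) * ((Real.exp (t*s) - 1)/s) = (1 - Real.exp (-(t*s)))/s := by
    have : Real.exp (-(t*s)) * Real.exp (t*s) = 1 := by
      rw [← Real.exp_add]; simp
    field_simp
    nlinarith [this]
  rw [Matrix.smul_mul, Matrix.one_mul]
  by_cases h : a = b
  · subst h
    simp only [Matrix.smul_apply, Matrix.add_apply, Matrix.one_apply_eq, Matrix.of_apply,
      hM_def, smul_eq_mul, if_pos rfl, if_true]
    rw [mul_add, mul_one, ← mul_assoc, hkey]
    field_simp
    ring
  · simp only [Matrix.smul_apply, Matrix.add_apply, Matrix.one_apply_ne (Ne.symm h),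
      Matrix.of_apply, hM_def, smul_eq_mul, if_neg h]
    rw [zero_add, ← mul_assoc, hkey]
    ring

theorem f81_matrix_exponential (L : Fin 4 → ℝ) (hL : ∀ a, 0 < L a)
    (t : ℝ) (ht : 0 ≤ t) (a b : Fin 4) :
    NormedSpace.exp (t • f81Q L) b a = f81P L a b t := by
  rw [f81_matrix_exponential' L hL t ht a b f81Q rfl]
  simp only [f81P, f81Alpha, f81Pi]
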